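/- For every s ∈ {0,1,…,N−1} and every strictly increasing k ∈ I(d+1,N+1), μ_N(v_{(s,k)}) = 0; consequently the image of φ is contained in Δ^{(2,1^{N−1})}Sym^d E = ker μ_N. -/

import Mathlib

open MvPolynomial TensorProduct

set_option maxHeartbeats 1000000
set_option synthInstance.maxHeartbeats 400000

noncomputable section

/-- `Sym' F c` : the `c`-th symmetric power of `E = F²`, realised as the space of
homogeneous polynomials of degree `c` in the two variables `X = X 0`, `Y = X 1`. -/
abbrev Sym' (F : Type*) [Field F] (c : ℕ) : Type _ :=
  ↥(MvPolynomial.homogeneousSubmodule (Fin 2) F c)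

variable (F : Type*) [Field F]

/-- The basis monomial `X^(c-i) Y^i` of `Sym' F c`; it is `0` (junk) if `i > c`. -/
def XY (c i : ℕ) : Sym' F c :=
  if h : i ≤ c then
    ⟨(X 0 : MvPolynomial (Fin 2) F) ^ (c - i) * X 1 ^ i, by
      rw [MvPolynomial.mem_homogeneousSubmodule]
      have := ((isHomogeneous_X_pow (R := F) (0 : Fin 2) (c - i)).mul
        (isHomogeneous_X_pow (R := F) (1 : Fin 2) i))
      rwa [Nat.sub_add_cancel h] at this⟩
  else 0

/-- `F_∧^{(c)}(k) = X^{c-k₁}Y^{k₁} ∧ ⋯ ∧ X^{c-k_r}Y^{k_r}` in `⋀^r (Sym' F c)`. -/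
def wedge (c : ℕ) {r : ℕ} (k : Fin r → ℕ) : ⋀[F]^r (Sym' F c) :=
  ⟨ExteriorAlgebra.ιMulti F r fun a => XY F c (k a),
    ExteriorAlgebra.ιMulti_range F r (Set.mem_range_self _)⟩

/-- `F(i,j) = F_∧^{(d)}(i) ⊗ X^{d-j}Y^j`. -/
def Fp (d : ℕ) {N : ℕ} (i : Fin N → ℕ) (j : ℕ) :
    (⋀[F]^N (Sym' F d)) ⊗[F] (Sym' F d) :=
  wedge F d i ⊗ₜ[F] XY F d j

/-- The multiplication map `μ_N : ⋀^N V ⊗ V → ⋀^{N+1} V` for `V = Sym' F c`. -/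
def mu (c N : ℕ) :
    ((⋀[F]^N (Sym' F c)) ⊗[F] (Sym' F c)) →ₗ[F] ⋀[F]^(N + 1) (Sym' F c) :=
  TensorProduct.lift
    (LinearMap.mk₂ F
      (fun w v => ⟨(w : ExteriorAlgebra F (Sym' F c)) * ExteriorAlgebra.ι F v, by
        have h := Submodule.mul_mem_mul w.2
          (LinearMap.mem_range_self (ExteriorAlgebra.ι F (M := Sym' F c)) v)
        rwa [← pow_succ] at h⟩)
      (fun w w' v => by ext; simp [add_mul])
      (fun a w v => by ext; simp [mul_assoc, Algebra.smul_mul_assoc])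
      (fun w v v' => by ext; simp [mul_add])
      (fun a w v => by ext; simp [Algebra.mul_smul_comm]))

/-- The box `B(k) = [k₁,k₂) × ⋯ × [k_N, k_{N+1})` as a finset of multi-indices. -/
def box {N : ℕ} (k : Fin (N + 1) → ℕ) : Finset (Fin N → ℕ) :=
  Fintype.piFinset fun a : Fin N => Finset.Ico (k a.castSucc) (k a.succ)

/-- `v_{(s,k)} = Σ_{i ∈ B(k)} F(i, s + |k| - N - |i|)`. -/
def vv (d N : ℕ) (s : ℕ) (k : Fin (N + 1) → ℕ) :
    (⋀[F]^N (Sym' F d)) ⊗[F] (Sym' F d) :=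
  ∑ i ∈ box k, Fp F d i (s + (∑ a, k a) - N - ∑ a, i a)

/-- A pair `(i, j)` is semistandard (with entries in `{0,…,d}`). -/
def IsSS (d : ℕ) {N : ℕ} (p : (Fin N → ℕ) × ℕ) : Prop :=
  StrictMono p.1 ∧ (∀ a, p.1 a ≤ d) ∧ p.2 ≤ d ∧
    ∀ a : Fin N, (a : ℕ) = 0 → p.1 a ≤ p.2

/-- The neighbour map `P`. -/
def Pmap {N : ℕ} (p : (Fin N → ℕ) × ℕ) : (Fin N → ℕ) × ℕ :=
  if h : (Finset.univ.filter fun a : Fin N => p.1 a ≤ p.2).Nonempty then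
    let α := (Finset.univ.filter fun a : Fin N => p.1 a ≤ p.2).max' h
    (Function.update p.1 α p.2, p.1 α)
  else p

/-- `F_Δ(i,j)`. -/
def FDelta (d : ℕ) {N : ℕ} (p : (Fin N → ℕ) × ℕ) :
    (⋀[F]^N (Sym' F d)) ⊗[F] (Sym' F d) :=
  if ∃ a, p.1 a = p.2 then Fp F d p.1 p.2
  else Fp F d p.1 p.2 + Fp F d (Pmap p).1 (Pmap p).2

/-- The content multiset of a pair. -/
def ssContent {N : ℕ} (p : (Fin N → ℕ) × ℕ) : Multiset ℕ :=
  p.2 ::ₘ Finset.univ.val.map p.1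

abbrev Dom (N d : ℕ) : Type _ := (Sym' F (N - 1)) ⊗[F] ↥(⋀[F]^(N + 1) (Sym' F (d + 1)))

/-- The codomain `⋀^N Sym^d E ⊗ Sym^d E` of `φ`. -/
abbrev Cod (N d : ℕ) : Type _ := ↥(⋀[F]^N (Sym' F d)) ⊗[F] (Sym' F d)

section Aux
variable {R : Type*} [CommRing R] {M : Type*} [AddCommGroup M] [Module R M]

lemma ιMulti_mul_ι (n : ℕ) (u : Fin n → M) (x : M) :
    (ExteriorAlgebra.ιMulti R n u : ExteriorAlgebra R M) * ExteriorAlgebra.ι R x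
      = ExteriorAlgebra.ιMulti R (n + 1) (Fin.snoc u x) := by
  rw [ExteriorAlgebra.ιMulti_apply, ExteriorAlgebra.ιMulti_apply, List.ofFn_succ']
  simp

lemma swap_snoc {N : ℕ} (i : Fin N → ℕ) (x : ℕ) (b : Fin N) :
    (Fin.snoc (Function.update i b x) (i b) : Fin (N + 1) → ℕ)
      = (Fin.snoc i x : Fin (N + 1) → ℕ) ∘ Equiv.swap b.castSucc (Fin.last N) := by
  funext a
  induction a using Fin.lastCases with
  | last => simp [Equiv.swap_apply_right]
  | cast c =>
    by_cases hc : c = b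
    · subst hc
      simp [Equiv.swap_apply_left]
    · have h1 : c.castSucc ≠ b.castSucc := by simpa [Fin.castSucc_inj] using hc
      have h2 : c.castSucc ≠ Fin.last N := (Fin.castSucc_lt_last c).ne
      simp [Equiv.swap_apply_of_ne_of_ne h1 h2, Function.update_of_ne hc]

lemma exists_interval {N : ℕ} (hN : 0 < N) (k : Fin (N + 1) → ℕ) (hk : StrictMono k)
    {t : ℕ} (h0 : k 0 ≤ t) (h1 : t < k (Fin.last N)) :
    ∃ b : Fin N, k b.castSucc ≤ t ∧ t < k b.succ := by
  classical
  set S := Finset.univ.filter (fun a : Fin N => k a.castSucc ≤ t) with hS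
  have h0' : (⟨0, hN⟩ : Fin N) ∈ S := by
    simp only [hS, Finset.mem_filter, Finset.mem_univ, true_and]
    simpa using h0
  have hne : S.Nonempty := ⟨_, h0'⟩
  refine ⟨S.max' hne, ?_, ?_⟩
  · have := S.max'_mem hne
    simpa [hS] using this
  · by_contra h
    push_neg at h
    set b := S.max' hne
    rcases lt_or_eq_of_le (Nat.succ_le_of_lt b.isLt) with hb | hb
    · have hcast : ((⟨b.val + 1, hb⟩ : Fin N)).castSucc = b.succ := by
        ext; simp
      have hbm : (⟨b.val + 1, hb⟩ : Fin N) ∈ S := by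
        simp only [hS, Finset.mem_filter, Finset.mem_univ, true_and]
        rw [hcast]
        exact h
      have h2 := S.le_max' _ hbm
      have h3 : (b : ℕ) + 1 ≤ (b : ℕ) := h2
      omega
    · have hlast : b.succ = Fin.last N := by
        ext
        simp only [Fin.val_succ, Fin.val_last]
        omega
      rw [hlast] at h
      omega

lemma interval_unique {N : ℕ} (k : Fin (N + 1) → ℕ) (hk : StrictMono k) {t : ℕ} {a b : Fin N}
    (ha1 : k a.castSucc ≤ t) (ha2 : t < k a.succ) (hb1 : k b.castSucc ≤ t) (hb2 : t < k b.succ) :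
    a = b := by
  by_contra h
  rcases lt_or_gt_of_ne h with hab | hab
  · have : a.succ ≤ b.castSucc := by
      rw [Fin.le_def]; simpa [Nat.succ_le_iff] using hab
    have := (hk.monotone this).trans hb1
    omega
  · have : b.succ ≤ a.castSucc := by
      rw [Fin.le_def]; simpa [Nat.succ_le_iff] using hab
    have := (hk.monotone this).trans ha1
    omega
end Aux

lemma tuple_XY_snoc (c : ℕ) {N : ℕ} (i : Fin N → ℕ) (j : ℕ) :
    (Fin.snoc (fun a => XY F c (i a)) (XY F c j) : Fin (N + 1) → Sym' F c)
      = XY F c ∘ (Fin.snoc i j : Fin (N + 1) → ℕ) := by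
  funext a
  induction a using Fin.lastCases with
  | last => simp
  | cast b => simp

lemma part1 (N d : ℕ) (s : ℕ) (hs : s < N) (k : Fin (N + 1) → ℕ) (hk : StrictMono k) :
    mu F d N (vv F d N s k) = 0 := by
  classical
  have hN : 0 < N := by omega
  set K := ∑ a, k a with hK
  set jf : (Fin N → ℕ) → ℕ := fun i => s + K - N - ∑ a, i a with hjf
  -- box membership facts
  have hbox : ∀ i : Fin N → ℕ, i ∈ box k → ∀ a : Fin N, k a.castSucc ≤ i a ∧ i a < k a.succ := by
    intro i hi a
    have := Fintype.mem_piFinset.1 hi a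
    simpa [Finset.mem_Ico] using this
  -- arithmetic facts
  have harith : ∀ i : Fin N → ℕ, i ∈ box k →
      (∑ a : Fin N, k a.castSucc) ≤ (∑ a, i a) ∧ (∑ a, i a) + N + k 0 ≤ K := by
    intro i hi
    constructor
    · exact Finset.sum_le_sum fun a _ => (hbox i hi a).1
    · have h1 : (∑ a, i a) + N ≤ ∑ a : Fin N, k a.succ := by
        have : ∑ a : Fin N, (i a + 1) ≤ ∑ a : Fin N, k a.succ :=
          Finset.sum_le_sum fun a _ => (hbox i hi a).2
        simpa [Finset.sum_add_distrib] using this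
      have h2 : K = k 0 + ∑ a : Fin N, k a.succ := Fin.sum_univ_succ k
      omega
  have hKcast : K = (∑ a : Fin N, k a.castSucc) + k (Fin.last N) := Fin.sum_univ_castSucc k
  have hjb : ∀ i : Fin N → ℕ, i ∈ box k → k 0 ≤ jf i ∧ jf i < k (Fin.last N) := by
    intro i hi
    have h1 := harith i hi
    have h2 := hKcast
    constructor <;> · simp only [hjf]; omega
  -- the choice of the interval containing `jf i`
  have hex : ∀ i : Fin N → ℕ, i ∈ box k → ∃ b : Fin N, k b.castSucc ≤ jf i ∧ jf i < k b.succ :=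
    fun i hi => exists_interval hN k hk (hjb i hi).1 (hjb i hi).2
  set pick : ∀ i : Fin N → ℕ, i ∈ box k → Fin N := fun i hi => (hex i hi).choose with hpick
  have pick_spec : ∀ i hi, k (pick i hi).castSucc ≤ jf i ∧ jf i < k (pick i hi).succ :=
    fun i hi => (hex i hi).choose_spec
  -- the involution
  set g : ∀ i : Fin N → ℕ, i ∈ box k → (Fin N → ℕ) :=
    fun i hi => Function.update i (pick i hi) (jf i) with hg
  have hgbox : ∀ i hi, g i hi ∈ box k := by
    intro i hi
    refine Fintype.mem_piFinset.2 fun a => ?_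
    by_cases ha : a = pick i hi
    · subst ha
      simp only [hg, Function.update_self, Finset.mem_Ico]
      exact pick_spec i hi
    · simp only [hg, Function.update_of_ne ha, Finset.mem_Ico]
      exact ⟨(hbox i hi a).1, (hbox i hi a).2⟩
  have hsum_upd : ∀ i hi, (∑ a, g i hi a) = jf i + ((∑ a, i a) - i (pick i hi)) := by
    intro i hi
    have h1 : (∑ a ∈ Finset.univ.erase (pick i hi), i a) + i (pick i hi) = ∑ a, i a :=
      Finset.sum_erase_add _ _ (Finset.mem_univ _)
    show (∑ a, Function.update i (pick i hi) (jf i) a) = _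
    rw [Finset.sum_update_of_mem (Finset.mem_univ _), Finset.sdiff_singleton_eq_erase]
    omega
  have hib_le : ∀ i : Fin N → ℕ, ∀ b : Fin N, i b ≤ ∑ a, i a :=
    fun i b => Finset.single_le_sum (fun a _ => Nat.zero_le _) (Finset.mem_univ b)
  have key1 : ∀ i hi, jf (g i hi) = i (pick i hi) := by
    intro i hi
    have h1 := hsum_upd i hi
    have h2 := harith i hi
    have h3 := hib_le i (pick i hi)
    simp only [hjf] at h1 ⊢
    omega
  have key3 : ∀ i hi, pick (g i hi) (hgbox i hi) = pick i hi := by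
    intro i hi
    have h1 := pick_spec (g i hi) (hgbox i hi)
    rw [key1 i hi] at h1
    have h2 := hbox i hi (pick i hi)
    exact interval_unique k hk h1.1 h1.2 h2.1 h2.2
  have key4 : ∀ i hi, g (g i hi) (hgbox i hi) = i := by
    intro i hi
    show Function.update (g i hi) (pick (g i hi) (hgbox i hi)) (jf (g i hi)) = i
    rw [key3 i hi, key1 i hi]
    show Function.update (Function.update i (pick i hi) (jf i)) (pick i hi) (i (pick i hi)) = i
    rw [Function.update_idem, Function.update_eq_self]
  -- reduce the goal to a sum in the exterior algebra
  rw [vv, map_sum, ← ZeroMemClass.coe_eq_zero]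
  push_cast
  have hterm : ∀ i : Fin N → ℕ,
      ((mu F d N (Fp F d i (jf i)) : ⋀[F]^(N+1) (Sym' F d)) : ExteriorAlgebra F (Sym' F d))
        = ExteriorAlgebra.ιMulti F (N + 1) (XY F d ∘ (Fin.snoc i (jf i) : Fin (N+1) → ℕ)) := by
    intro i
    have : mu F d N (Fp F d i (jf i))
        = ⟨(wedge F d i : ExteriorAlgebra F (Sym' F d)) * ExteriorAlgebra.ι F (XY F d (jf i)), by
            have h := Submodule.mul_mem_mul (wedge F d i).2
              (LinearMap.mem_range_self (ExteriorAlgebra.ι F (M := Sym' F d)) (XY F d (jf i)))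
            rwa [← pow_succ] at h⟩ := by
      rw [mu, Fp, TensorProduct.lift.tmul]
      rfl
    rw [this]
    show (wedge F d i : ExteriorAlgebra F (Sym' F d)) * ExteriorAlgebra.ι F (XY F d (jf i)) = _
    rw [wedge]
    show (ExteriorAlgebra.ιMulti F N fun a => XY F d (i a)) * ExteriorAlgebra.ι F (XY F d (jf i)) = _
    rw [ιMulti_mul_ι, ← tuple_XY_snoc]
  calc (∑ i ∈ box k, ((mu F d N (Fp F d i (jf i)) : ⋀[F]^(N+1) (Sym' F d)) : ExteriorAlgebra F (Sym' F d)))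
      = ∑ i ∈ box k, ExteriorAlgebra.ιMulti F (N + 1) (XY F d ∘ (Fin.snoc i (jf i) : Fin (N+1) → ℕ)) :=
        Finset.sum_congr rfl fun i _ => hterm i
    _ = 0 := ?_
  apply Finset.sum_involution (fun i hi => g i hi)
  · -- f i + f (g i) = 0
    intro i hi
    have hswap : (XY F d ∘ (Fin.snoc (g i hi) (jf (g i hi)) : Fin (N+1) → ℕ))
        = (XY F d ∘ (Fin.snoc i (jf i) : Fin (N+1) → ℕ)) ∘ Equiv.swap (pick i hi).castSucc (Fin.last N) := by
      rw [key1 i hi]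
      show XY F d ∘ (Fin.snoc (Function.update i (pick i hi) (jf i)) (i (pick i hi)) : Fin (N+1) → ℕ) = _
      rw [swap_snoc i (jf i) (pick i hi)]
      rfl
    rw [hswap, AlternatingMap.map_swap _ _ (Fin.castSucc_lt_last (pick i hi)).ne]
    exact add_neg_cancel _
  · -- f i ≠ 0 → g i ≠ i
    intro i hi hne
    intro hgi
    apply hne
    have hjeq : jf i = i (pick i hi) := by
      have := congrFun hgi (pick i hi)
      simpa [hg] using this
    apply AlternatingMap.map_eq_zero_of_eq _ _
      (i := (pick i hi).castSucc) (j := Fin.last N)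
    · simp [Fin.snoc_castSucc, Fin.snoc_last, hjeq]
    · exact (Fin.castSucc_lt_last (pick i hi)).ne
  · exact key4
  · exact hgbox

lemma XY_span (c : ℕ) (x : Sym' F c) :
    x ∈ Submodule.span F (Set.range fun t : Fin (c + 1) => XY F c (t : ℕ)) := by
  obtain ⟨p, hp⟩ := x
  rw [mem_homogeneousSubmodule] at hp
  have hdeg : ∀ m ∈ p.support, m 0 + m 1 = c := by
    intro m hm
    have h1 := hp (MvPolynomial.mem_support_iff.1 hm)
    have h2 : (Finsupp.weight 1) m = m 0 + m 1 := by
      show (Finsupp.weight (fun _ => (1 : ℕ))) m = _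
      rw [← Finsupp.degree_eq_weight_one, Finsupp.degree_apply]
      rw [Finset.sum_subset (Finset.subset_univ _)
        (fun i _ hi => Finsupp.notMem_support_iff.1 hi)]
      exact Fin.sum_univ_two m
    rw [h2] at h1
    exact h1
  have hrep : (⟨p, (mem_homogeneousSubmodule _ _).2 hp⟩ : Sym' F c)
      = ∑ m ∈ p.support, MvPolynomial.coeff m p • XY F c (m 1) := by
    apply Subtype.coe_injective
    show p = ((∑ m ∈ p.support, MvPolynomial.coeff m p • XY F c (m 1) : Sym' F c) : MvPolynomial (Fin 2) F)
    rw [AddSubmonoidClass.coe_finset_sum]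
    conv_lhs => rw [← MvPolynomial.support_sum_monomial_coeff p]
    refine Finset.sum_congr rfl fun m hm => ?_
    have h01 : m 0 + m 1 = c := hdeg m hm
    have hle : m 1 ≤ c := by omega
    have hsub : c - m 1 = m 0 := by omega
    rw [SetLike.val_smul, XY, dif_pos hle]
    show monomial m (MvPolynomial.coeff m p)
      = MvPolynomial.coeff m p • ((X 0 : MvPolynomial (Fin 2) F) ^ (c - m 1) * X 1 ^ m 1)
    rw [hsub]
    have hmono : (monomial m (1 : F) : MvPolynomial (Fin 2) F) = X 0 ^ m 0 * X 1 ^ m 1 := by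
      rw [monic_monomial_eq, Finsupp.prod_pow]
      exact Fin.prod_univ_two _
    rw [← hmono, smul_monomial, smul_eq_mul, mul_one]
  rw [hrep]
  refine Submodule.sum_mem _ fun m hm => Submodule.smul_mem _ _ (Submodule.subset_span ?_)
  exact ⟨⟨m 1, by have := hdeg m hm; omega⟩, rfl⟩

lemma wedge_span (c r : ℕ) (y : ↥(⋀[F]^r (Sym' F c))) :
    y ∈ Submodule.span F {w : ↥(⋀[F]^r (Sym' F c)) |
      ∃ k : Fin r → ℕ, StrictMono k ∧ (∀ a, k a ≤ c) ∧ w = wedge F c k} := by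
  classical
  set S := {w : ↥(⋀[F]^r (Sym' F c)) |
      ∃ k : Fin r → ℕ, StrictMono k ∧ (∀ a, k a ≤ c) ∧ w = wedge F c k} with hS
  set Ψ := (ExteriorAlgebra.ιMulti F r (M := Sym' F c)).codRestrict (⋀[F]^r (Sym' F c))
    (fun v => ExteriorAlgebra.ιMulti_range F r (Set.mem_range_self v)) with hΨ
  have key : ∀ v : Fin r → Sym' F c, Ψ v ∈ Submodule.span F S := by
    intro v
    have hv : ∀ a, ∃ gcoef : Fin (c + 1) → F, ∑ t, gcoef t • XY F c (t : ℕ) = v a :=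
      fun a => (Submodule.mem_span_range_iff_exists_fun F).1 (XY_span F c (v a))
    choose gc hgc using hv
    have hveq : v = fun a => ∑ t : Fin (c + 1), gc a t • XY F c (t : ℕ) := by
      funext a; rw [hgc]
    rw [hveq]
    rw [show Ψ (fun a => ∑ t : Fin (c + 1), gc a t • XY F c (t : ℕ))
        = ∑ ρ : Fin r → Fin (c + 1), Ψ (fun a => gc a (ρ a) • XY F c ((ρ a : ℕ))) from
      Ψ.toMultilinearMap.map_sum (fun a t => gc a t • XY F c (t : ℕ))]
    refine Submodule.sum_mem _ fun ρ _ => ?_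
    rw [show Ψ (fun a => gc a (ρ a) • XY F c ((ρ a : ℕ)))
        = (∏ a, gc a (ρ a)) • Ψ (fun a => XY F c ((ρ a : ℕ))) from
      Ψ.toMultilinearMap.map_smul_univ _ _]
    refine Submodule.smul_mem _ _ ?_
    by_cases hinj : Function.Injective ρ
    · set σ := Tuple.sort ρ with hσ
      have hm : Monotone (ρ ∘ σ) := Tuple.monotone_sort ρ
      have hsm : StrictMono (ρ ∘ σ) := hm.strictMono_of_injective (hinj.comp σ.injective)
      have hperm := Ψ.map_perm (fun a => XY F c ((ρ a : ℕ))) σ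
      have hx : Ψ (fun a => XY F c ((ρ a : ℕ)))
          = (Equiv.Perm.sign σ) • Ψ ((fun a => XY F c ((ρ a : ℕ))) ∘ σ) := by
        rw [hperm, smul_smul, Int.units_mul_self, one_smul]
      rw [hx]
      have hw : Ψ ((fun a => XY F c ((ρ a : ℕ))) ∘ σ) = wedge F c (fun a => ((ρ (σ a) : ℕ))) :=
        Subtype.coe_injective rfl
      rw [hw]
      have hmem : wedge F c (fun a => ((ρ (σ a) : ℕ))) ∈ S := by
        refine ⟨fun a => ((ρ (σ a) : ℕ)), fun a b hab => ?_, fun a => ?_, rfl⟩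
        · exact_mod_cast hsm hab
        · exact Nat.lt_succ_iff.1 (ρ (σ a)).isLt
      rcases Int.units_eq_one_or (Equiv.Perm.sign σ) with h1 | h1 <;> rw [h1]
      · simpa using Submodule.subset_span hmem
      · rw [Units.neg_smul, one_smul]
        exact Submodule.neg_mem _ (Submodule.subset_span hmem)
    · rw [Function.Injective] at hinj
      push_neg at hinj
      obtain ⟨a, a', h1, h2⟩ := hinj
      have h0 : Ψ (fun a => XY F c ((ρ a : ℕ))) = 0 :=
        Ψ.map_eq_zero_of_eq _ (by rw [h1]) h2
      rw [h0]
      exact Submodule.zero_mem _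
  have hy : (y : ExteriorAlgebra F (Sym' F c)) ∈
      Submodule.span F (Set.range (ExteriorAlgebra.ιMulti F r (M := Sym' F c))) := by
    rw [ExteriorAlgebra.ιMulti_span_fixedDegree]
    exact y.2
  have main := Submodule.span_induction
    (p := fun x _ => ∀ h2 : x ∈ ⋀[F]^r (Sym' F c),
      (⟨x, h2⟩ : ↥(⋀[F]^r (Sym' F c))) ∈ Submodule.span F S)
    (fun x hx => by
      obtain ⟨v, rfl⟩ := hx
      intro h2
      have : (⟨ExteriorAlgebra.ιMulti F r v, h2⟩ : ↥(⋀[F]^r (Sym' F c))) = Ψ v :=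
        Subtype.coe_injective rfl
      rw [this]
      exact key v)
    (fun h2 => Submodule.zero_mem _)
    (fun x z hx hz px pz h2 => by
      have hx2 : x ∈ ⋀[F]^r (Sym' F c) := by
        rw [← ExteriorAlgebra.ιMulti_span_fixedDegree]; exact hx
      have hz2 : z ∈ ⋀[F]^r (Sym' F c) := by
        rw [← ExteriorAlgebra.ιMulti_span_fixedDegree]; exact hz
      have : (⟨x + z, h2⟩ : ↥(⋀[F]^r (Sym' F c))) = ⟨x, hx2⟩ + ⟨z, hz2⟩ := rfl
      rw [this]
      exact Submodule.add_mem _ (px hx2) (pz hz2))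
    (fun a x hx px h2 => by
      have hx2 : x ∈ ⋀[F]^r (Sym' F c) := by
        rw [← ExteriorAlgebra.ιMulti_span_fixedDegree]; exact hx
      have : (⟨a • x, h2⟩ : ↥(⋀[F]^r (Sym' F c))) = a • ⟨x, hx2⟩ := rfl
      rw [this]
      exact Submodule.smul_mem _ _ (px hx2))
    hy
  have := main y.2
  simpa using this

/-- Lemma 2.6 of the paper. For every `s ∈ {0,…,N-1}` and strictly increasing
`k ∈ I(d+1, N+1)` we have `μ_N(v_{(s,k)}) = 0`; consequently the image of `φ` is contained in
`Δ^{(2,1^{N-1})} Sym^d E = ker μ_N`. -/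
theorem statement8 (F : Type*) [Field F] (N d : ℕ) (hN : 0 < N) :
    (∀ s < N, ∀ k : Fin (N + 1) → ℕ, StrictMono k → (∀ a, k a ≤ d + 1) →
      mu F d N (vv F d N s k) = 0) ∧
    ∀ φ : Dom F N d →ₗ[F] Cod F N d,
      (∀ s < N, ∀ k : Fin (N + 1) → ℕ, StrictMono k → (∀ a, k a ≤ d + 1) →
        φ (XY F (N - 1) s ⊗ₜ[F] wedge F (d + 1) k) = vv F d N s k) →
      LinearMap.range φ ≤ LinearMap.ker (mu F d N) := by
  refine ⟨fun s hs k hk _ => part1 F N d s hs k hk, ?_⟩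
  intro φ hφ
  rintro _ ⟨x, rfl⟩
  rw [LinearMap.mem_ker]
  have base : ∀ t : ℕ, t < N → ∀ kk : Fin (N + 1) → ℕ, StrictMono kk → (∀ a, kk a ≤ d + 1) →
      mu F d N (φ (XY F (N - 1) t ⊗ₜ[F] wedge F (d + 1) kk)) = 0 := by
    intro t ht kk h1 h2
    rw [hφ t ht kk h1 h2]
    exact part1 F N d t ht kk h1
  have hgen : ∀ y ∈ Submodule.span F {w : ↥(⋀[F]^(N + 1) (Sym' F (d + 1))) |
        ∃ k : Fin (N + 1) → ℕ, StrictMono k ∧ (∀ a, k a ≤ d + 1) ∧ w = wedge F (d + 1) k},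
      ∀ x ∈ Submodule.span F (Set.range fun t : Fin ((N - 1) + 1) => XY F (N - 1) (t : ℕ)),
      mu F d N (φ (x ⊗ₜ[F] y)) = 0 := by
    intro y hy
    refine Submodule.span_induction ?_ ?_ ?_ ?_ hy
    · rintro w ⟨kk, h1, h2, rfl⟩ x hx
      refine Submodule.span_induction ?_ ?_ ?_ ?_ hx
      · rintro _ ⟨t, rfl⟩
        exact base t (by have := t.isLt; omega) kk h1 h2
      · simp
      · intro u v hu hv pu pv
        rw [add_tmul, map_add, map_add, pu, pv, add_zero]
      · intro a u hu pu
        have : (a • u) ⊗ₜ[F] wedge F (d + 1) kk = a • (u ⊗ₜ[F] wedge F (d + 1) kk) :=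
          TensorProduct.smul_tmul' a u _
        rw [this, map_smul, map_smul, pu, smul_zero]
    · intro x _
      simp
    · intro u v hu hv pu pv x hx
      rw [tmul_add, map_add, map_add, pu x hx, pv x hx, add_zero]
    · intro a u hu pu x hx
      rw [tmul_smul, map_smul, map_smul, pu x hx, smul_zero]
  induction x using TensorProduct.induction_on with
  | zero => simp
  | tmul x y => exact hgen y (wedge_span F (d + 1) (N + 1) y) x (XY_span F (N - 1) x)
  | add u v hu hv => rw [map_add, map_add, hu, hv, add_zero]

end
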